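/- Let C be an unmixed clutter with a perfect matching e_1,…,e_g of König type. If C has no cycles of length 3 or 4, then the independence complex Δ_C is pure shellable. -/

import Mathlib

variable {V : Type} [Fintype V] [DecidableEq V]

/-- A clutter: a family of finsets (edges), none of which contains another. -/
def IsClutter (E : Set (Finset V)) : Prop :=
  ∀ e ∈ E, ∀ f ∈ E, e ⊆ f → e = f

/-- A vertex cover: a set of vertices meeting every edge. -/
def IsVertexCover (E : Set (Finset V)) (C : Finset V) : Prop :=
  ∀ e ∈ E, (e ∩ C).Nonempty

/-- A minimal vertex cover. -/
def IsMinimalVertexCover (E : Set (Finset V)) (C : Finset V) : Prop :=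
  IsVertexCover E C ∧ ∀ D ⊂ C, ¬ IsVertexCover E D

/-- The covering number: minimum cardinality of a vertex cover. -/
noncomputable def coveringNumber (E : Set (Finset V)) : ℕ :=
  sInf {n : ℕ | ∃ C : Finset V, IsVertexCover E C ∧ C.card = n}

/-- Unmixed: all minimal vertex covers have the same cardinality. -/
def Unmixed (E : Set (Finset V)) : Prop :=
  ∀ C D : Finset V, IsMinimalVertexCover E C → IsMinimalVertexCover E D →
    C.card = D.card

/-- A matching: a set of pairwise disjoint edges. -/
def IsMatching (E : Set (Finset V)) (M : Finset (Finset V)) : Prop :=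
  ↑M ⊆ E ∧ (M : Set (Finset V)).Pairwise Disjoint

/-- The König property: the maximum size of a matching equals the covering number. -/
def HasKonigProperty (E : Set (Finset V)) : Prop :=
  (∃ M : Finset (Finset V), IsMatching E M ∧ M.card = coveringNumber E) ∧
  ∀ M : Finset (Finset V), IsMatching E M → M.card ≤ coveringNumber E

/-- A perfect matching of König type: pairwise disjoint edges `em 0, …, em (g-1)`
whose union is the whole vertex set, where `g` is the covering number. -/
def IsPerfectMatchingKT (E : Set (Finset V)) {g : ℕ} (em : Fin g → Finset V) : Prop :=
  (∀ i, em i ∈ E) ∧ (∀ i j, i ≠ j → Disjoint (em i) (em j)) ∧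
  (∀ x : V, ∃ i, x ∈ em i) ∧ g = coveringNumber E

/-- An independent set: contains no edge. -/
def IsIndependentSet (E : Set (Finset V)) (F : Finset V) : Prop :=
  ∀ e ∈ E, ¬ e ⊆ F

/-- A facet of the independence complex: a maximal independent set. -/
def IsFacet (E : Set (Finset V)) (F : Finset V) : Prop :=
  IsIndependentSet E F ∧ ∀ G : Finset V, IsIndependentSet E G → F ⊆ G → F = G

/-- The set of facets of the independence complex of a clutter. -/
def cFacets (E : Set (Finset V)) : Set (Finset V) := {F | IsFacet E F}

/-- `F : Fin s → Finset V` is a shelling order of the family of facets `Fac`. -/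
def IsShelling {s : ℕ} (Fac : Set (Finset V)) (F : Fin s → Finset V) : Prop :=
  Function.Injective F ∧ (∀ G : Finset V, G ∈ Fac ↔ ∃ i, F i = G) ∧
  ∀ i j : Fin s, i < j →
    ∃ v ∈ F j \ F i, ∃ l : Fin s, l < j ∧ F j \ F l = {v}

/-- A family of facets is shellable if it admits a shelling order. -/
def Shellable (Fac : Set (Finset V)) : Prop :=
  ∃ (s : ℕ) (F : Fin s → Finset V), IsShelling Fac F

/-- A family of facets is pure if all its members have the same cardinality. -/
def PureFamily (Fac : Set (Finset V)) : Prop :=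
  ∀ F ∈ Fac, ∀ G ∈ Fac, F.card = G.card

/-- Pure shellable: pure and shellable. -/
def PureShellable (Fac : Set (Finset V)) : Prop :=
  PureFamily Fac ∧ Shellable Fac

/-- A free vertex: a vertex belonging to exactly one edge. -/
def HasFreeVertex (E : Set (Finset V)) : Prop :=
  ∃ x : V, ∃ e ∈ E, x ∈ e ∧ ∀ f ∈ E, x ∈ f → f = e

/-- A cycle of length `r`: `r` distinct vertices and `r` distinct edges such that each
of the vertices lies in exactly two of the edges and each of the edges contains exactly
two of the vertices. -/
def HasCycleOfLength (E : Set (Finset V)) (r : ℕ) : Prop :=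
  ∃ (v : Fin r → V) (f : Fin r → Finset V),
    Function.Injective v ∧ Function.Injective f ∧ (∀ j, f j ∈ E) ∧
    (∀ i : Fin r, (Finset.univ.filter (fun j => v i ∈ f j)).card = 2) ∧
    (∀ j : Fin r, (Finset.univ.filter (fun i => v i ∈ f j)).card = 2)


open Finset in
private lemma aux_card_filter_fin3 (P : Fin 3 → Prop) [DecidablePred P] :
    (Finset.univ.filter P).card =
      (if P 0 then 1 else 0) + (if P 1 then 1 else 0) + (if P 2 then 1 else 0) := by
  rw [Finset.card_filter, Fin.sum_univ_three]

open Finset in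
private lemma aux_card_filter_fin4 (P : Fin 4 → Prop) [DecidablePred P] :
    (Finset.univ.filter P).card =
      (if P 0 then 1 else 0) + (if P 1 then 1 else 0) + (if P 2 then 1 else 0) +
      (if P 3 then 1 else 0) := by
  rw [Finset.card_filter, Fin.sum_univ_four]

/-- base-B digit uniqueness -/
private lemma aux_digits {B : ℕ} : ∀ {g : ℕ} (a b : Fin g → ℕ),
    (∀ i, a i < B) → (∀ i, b i < B) →
    (∑ i, a i * B ^ (i : ℕ)) = (∑ i, b i * B ^ (i : ℕ)) → a = b := by
  intro g
  induction g with
  | zero => intro a b _ _ _; funext i; exact i.elim0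
  | succ n ih =>
    intro a b ha hb hsum
    have expand : ∀ (c : Fin (n+1) → ℕ),
        (∑ i, c i * B ^ (i : ℕ)) = c 0 + B * ∑ i : Fin n, c i.succ * B ^ (i : ℕ) := by
      intro c
      rw [Fin.sum_univ_succ]
      simp only [Fin.val_zero, pow_zero, mul_one, Fin.val_succ]
      rw [Finset.mul_sum]
      congr 1
      apply Finset.sum_congr rfl
      intro i _
      ring
    rw [expand a, expand b] at hsum
    have hB : 0 < B := Nat.pos_of_ne_zero (by rintro rfl; exact Nat.not_lt_zero _ (ha 0))
    have hmod : a 0 = b 0 := by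
      have := congrArg (· % B) hsum
      simpa [Nat.add_mul_mod_self_left, Nat.mod_eq_of_lt (ha 0), Nat.mod_eq_of_lt (hb 0)]
        using this
    have htail : (∑ i : Fin n, a i.succ * B ^ (i : ℕ)) = ∑ i : Fin n, b i.succ * B ^ (i : ℕ) := by
      rw [hmod] at hsum
      have := Nat.add_left_cancel hsum
      exact Nat.eq_of_mul_eq_mul_left hB this
    have := ih (fun i => a i.succ) (fun i => b i.succ) (fun i => ha i.succ) (fun i => hb i.succ) htail
    funext i
    refine Fin.cases ?_ ?_ i
    · exact hmod
    · intro j; exact congrFun this j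

/-- every cover contains a minimal cover -/
private lemma aux_exists_min_subcover (E : Set (Finset V)) :
    ∀ (n : ℕ) (C : Finset V), C.card ≤ n → IsVertexCover E C →
      ∃ M, M ⊆ C ∧ IsMinimalVertexCover E M := by
  intro n
  induction n with
  | zero =>
    intro C hc hcov
    refine ⟨C, subset_rfl, hcov, ?_⟩
    intro D hD
    exact absurd (Finset.card_lt_card hD)
      (by simp [Nat.le_zero.mp hc, Nat.not_lt_zero])
  | succ n ih =>
    intro C hc hcov
    by_cases hmin : ∀ D ⊂ C, ¬ IsVertexCover E D
    · exact ⟨C, subset_rfl, hcov, hmin⟩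
    · push_neg at hmin
      obtain ⟨D, hDC, hDcov⟩ := hmin
      have : D.card ≤ n := by
        have := Finset.card_lt_card hDC
        omega
      obtain ⟨M, hMD, hM⟩ := ih D this hDcov
      exact ⟨M, hMD.trans hDC.subset, hM⟩


/-- covers have card at least the covering number -/
private lemma aux_cover_ge (E : Set (Finset V)) (C : Finset V) (hC : IsVertexCover E C) :
    coveringNumber E ≤ C.card :=
  Nat.sInf_le ⟨C, hC, rfl⟩

/-- minimal covers have exactly one vertex in each matching edge -/
private lemma aux_min_cover_one (E : Set (Finset V)) (hunmixed : Unmixed E)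
    {g : ℕ} (em : Fin g → Finset V) (hpm : IsPerfectMatchingKT E em)
    (hne : ∅ ∉ E) (M : Finset V) (hM : IsMinimalVertexCover E M) :
    ∀ i, (em i ∩ M).card = 1 := by
  classical
  obtain ⟨hmem, hdisj, hcover, hg⟩ := hpm
  have huniv : IsVertexCover E Finset.univ := by
    intro e he
    rcases Finset.eq_empty_or_nonempty e with rfl | hne'
    · exact absurd he hne
    · simpa using hne'
  have hSne : {n : ℕ | ∃ C : Finset V, IsVertexCover E C ∧ C.card = n}.Nonempty :=
    ⟨(Finset.univ : Finset V).card, Finset.univ, huniv, rfl⟩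
  obtain ⟨C0, hC0cov, hC0card⟩ := Nat.sInf_mem hSne
  have hC0min : IsMinimalVertexCover E C0 := by
    refine ⟨hC0cov, fun D hD hDcov => ?_⟩
    have h1 : coveringNumber E ≤ D.card := aux_cover_ge E D hDcov
    have h2 : D.card < C0.card := Finset.card_lt_card hD
    rw [hC0card] at h2
    exact absurd h1 (by unfold coveringNumber; omega)
  have hMcard : M.card = g := by
    rw [hunmixed M C0 hM hC0min, hC0card, hg]
    rfl
  -- partition count
  have hbi : Finset.univ.biUnion (fun i : Fin g => em i ∩ M) = M := by
    ext x
    simp only [Finset.mem_biUnion, Finset.mem_univ, true_and, Finset.mem_inter]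
    constructor
    · rintro ⟨i, _, hx⟩; exact hx
    · intro hx
      obtain ⟨i, hi⟩ := hcover x
      exact ⟨i, hi, hx⟩
  have hsum : (∑ i : Fin g, (em i ∩ M).card) = M.card := by
    have h := Finset.card_biUnion (s := (Finset.univ : Finset (Fin g)))
      (t := fun i => em i ∩ M) (fun i _ j _ hij =>
      Finset.disjoint_of_subset_left Finset.inter_subset_left
        (Finset.disjoint_of_subset_right Finset.inter_subset_left (hdisj i j hij)))
    rw [hbi] at h
    exact h.symm
  have hone : ∀ i, 1 ≤ (em i ∩ M).card := by
    intro i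
    have := hM.1 (em i) (hmem i)
    exact Finset.card_pos.mpr this
  -- sum of g terms each ≥ 1 equals g ⇒ each is 1
  intro i
  by_contra hne2
  have h2 : 2 ≤ (em i ∩ M).card := by
    have := hone i; omega
  have : g + 1 ≤ ∑ j : Fin g, (em j ∩ M).card := by
    have := Finset.sum_lt_sum (f := fun _ : Fin g => 1) (g := fun j => (em j ∩ M).card)
      (fun j _ => hone j) ⟨i, Finset.mem_univ i, show (1:ℕ) < (em i ∩ M).card by omega⟩
    simpa using this
  omega


private lemma aux_mk_cycle3 {E : Set (Finset V)} (h3 : ¬ HasCycleOfLength E 3)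
    {a b c : V} {e1 e2 e3 : Finset V}
    (he1 : e1 ∈ E) (he2 : e2 ∈ E) (he3 : e3 ∈ E)
    (ha1 : a ∈ e1) (ha2 : a ∈ e2) (ha3 : a ∉ e3)
    (hb1 : b ∈ e1) (hb2 : b ∉ e2) (hb3 : b ∈ e3)
    (hc1 : c ∉ e1) (hc2 : c ∈ e2) (hc3 : c ∈ e3) : False := by
  classical
  apply h3
  have hab : a ≠ b := fun h => hb2 (h ▸ ha2)
  have hac : a ≠ c := fun h => hc1 (h ▸ ha1)
  have hbc : b ≠ c := fun h => hc1 (h ▸ hb1)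
  have h12 : e1 ≠ e2 := fun h => hb2 (h ▸ hb1)
  have h13 : e1 ≠ e3 := fun h => ha3 (h ▸ ha1)
  have h23 : e2 ≠ e3 := fun h => ha3 (h ▸ ha2)
  refine ⟨![a, b, c], ![e1, e2, e3], ?_, ?_, ?_, ?_, ?_⟩
  · intro x y hxy
    fin_cases x <;> fin_cases y <;> simp_all
  · intro x y hxy
    fin_cases x <;> fin_cases y <;> simp_all
  · intro j; fin_cases j <;> simpa
  · intro i
    fin_cases i <;>
      · rw [Finset.card_filter, Fin.sum_univ_three]
        simp_all
  · intro j
    fin_cases j <;>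
      · rw [Finset.card_filter, Fin.sum_univ_three]
        simp_all

private lemma aux_mk_cycle4 {E : Set (Finset V)} (h4 : ¬ HasCycleOfLength E 4)
    {a b c d : V} {e1 e2 e3 e4 : Finset V}
    (he1 : e1 ∈ E) (he2 : e2 ∈ E) (he3 : e3 ∈ E) (he4 : e4 ∈ E)
    (ha1 : a ∈ e1) (ha2 : a ∈ e2) (ha3 : a ∉ e3) (ha4 : a ∉ e4)
    (hb1 : b ∉ e1) (hb2 : b ∈ e2) (hb3 : b ∈ e3) (hb4 : b ∉ e4)
    (hc1 : c ∉ e1) (hc2 : c ∉ e2) (hc3 : c ∈ e3) (hc4 : c ∈ e4)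
    (hd1 : d ∈ e1) (hd2 : d ∉ e2) (hd3 : d ∉ e3) (hd4 : d ∈ e4) : False := by
  classical
  apply h4
  have hab : a ≠ b := fun h => hb1 (h ▸ ha1)
  have hac : a ≠ c := fun h => hc1 (h ▸ ha1)
  have had : a ≠ d := fun h => hd2 (h ▸ ha2)
  have hbc : b ≠ c := fun h => hc2 (h ▸ hb2)
  have hbd : b ≠ d := fun h => hd2 (h ▸ hb2)
  have hcd : c ≠ d := fun h => hd3 (h ▸ hc3)
  have h12 : e1 ≠ e2 := fun h => hb1 (h ▸ hb2)
  have h13 : e1 ≠ e3 := fun h => hb1 (h ▸ hb3)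
  have h14 : e1 ≠ e4 := fun h => ha4 (h ▸ ha1)
  have h23 : e2 ≠ e3 := fun h => ha3 (h ▸ ha2)
  have h24 : e2 ≠ e4 := fun h => ha4 (h ▸ ha2)
  have h34 : e3 ≠ e4 := fun h => hb4 (h ▸ hb3)
  refine ⟨![a, b, c, d], ![e1, e2, e3, e4], ?_, ?_, ?_, ?_, ?_⟩
  · intro x y hxy
    fin_cases x <;> fin_cases y <;> simp_all
  · intro x y hxy
    fin_cases x <;> fin_cases y <;> simp_all
  · intro j; fin_cases j <;> simpa
  · intro i
    fin_cases i <;>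
      · rw [Finset.card_filter, Fin.sum_univ_four]
        simp_all
  · intro j
    fin_cases j <;>
      · rw [Finset.card_filter, Fin.sum_univ_four]
        simp_all


/-- Key chain lemma: vertices in a matching edge are comparable w.r.t. edge membership. -/
private lemma aux_chain (E : Set (Finset V)) (hclut : IsClutter E) (hunmixed : Unmixed E)
    {g : ℕ} (em : Fin g → Finset V) (hpm : IsPerfectMatchingKT E em) (hne : ∅ ∉ E)
    (h3 : ¬ HasCycleOfLength E 3) (h4 : ¬ HasCycleOfLength E 4)
    (i : Fin g) (u : V) (hu : u ∈ em i) (v : V) (hv : v ∈ em i) :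
    (∀ f ∈ E, u ∈ f → v ∈ f) ∨ (∀ f ∈ E, v ∈ f → u ∈ f) := by
  classical
  by_contra hcon
  push_neg at hcon
  obtain ⟨⟨f, hf, huf, hvf⟩, ⟨f', hf', hvf', huf'⟩⟩ := hcon
  have huv : u ≠ v := fun h => hvf (h ▸ huf)
  have hfei : f ≠ em i := fun h => hvf (h ▸ hv)
  have hf'ei : f' ≠ em i := fun h => huf' (h ▸ hu)
  by_cases hc : ∃ c, c ∈ f ∧ c ∈ f' ∧ c ∉ em i
  · obtain ⟨c, hcf, hcf', hcei⟩ := hc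
    exact aux_mk_cycle3 h3 (hpm.1 i) hf hf' hu huf huf' hv hvf hvf' hcei hcf hcf'
  · push_neg at hc
    -- f ∩ f' ⊆ em i
    set D : Finset V := insert u (insert v (Finset.univ \ (f ∪ f' ∪ em i))) with hD
    have hmemD : ∀ x, x ∈ D ↔ x = u ∨ x = v ∨ (x ∉ f ∧ x ∉ f' ∧ x ∉ em i) := by
      intro x
      simp only [hD, Finset.mem_insert, Finset.mem_sdiff, Finset.mem_univ, true_and,
        Finset.mem_union]
      tauto
    have hDf : ∀ x ∈ D, x ∈ f → x = u := by
      intro x hx hxf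
      rcases (hmemD x).mp hx with rfl | rfl | ⟨h1, _, _⟩
      · rfl
      · exact absurd hxf hvf
      · exact absurd hxf h1
    have hDf' : ∀ x ∈ D, x ∈ f' → x = v := by
      intro x hx hxf
      rcases (hmemD x).mp hx with rfl | rfl | ⟨_, h2, _⟩
      · exact absurd hxf huf'
      · rfl
      · exact absurd hxf h2
    have hDcov : IsVertexCover E D := by
      intro h hh
      by_contra hemp
      rw [Finset.not_nonempty_iff_eq_empty] at hemp
      have hdis : ∀ x ∈ h, x ∉ D := by
        intro x hx hxD
        exact absurd hemp (Finset.nonempty_iff_ne_empty.mp ⟨x, Finset.mem_inter.mpr ⟨hx, hxD⟩⟩)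
      have huh : u ∉ h := fun hx => hdis u hx ((hmemD u).mpr (Or.inl rfl))
      have hvh : v ∉ h := fun hx => hdis v hx ((hmemD v).mpr (Or.inr (Or.inl rfl)))
      have hsub : ∀ x ∈ h, x ∈ f ∨ x ∈ f' ∨ x ∈ em i := by
        intro x hx
        by_contra hx'
        push_neg at hx'
        exact hdis x hx ((hmemD x).mpr (Or.inr (Or.inr ⟨hx'.1, hx'.2.1, hx'.2.2⟩)))
      have hhei : h ≠ em i := fun he => huh (he ▸ hu)
      have hhf : h ≠ f := fun he => huh (he.symm ▸ huf)
      have hhf' : h ≠ f' := fun he => hvh (he.symm ▸ hvf')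
      by_cases hA : ∃ c ∈ h, c ∈ f ∧ c ∉ em i
      · by_cases hB : ∃ c' ∈ h, c' ∈ f' ∧ c' ∉ em i
        · obtain ⟨c, hch, hcf, hcei⟩ := hA
          obtain ⟨c', hc'h, hc'f', hc'ei⟩ := hB
          have hcf' : c ∉ f' := fun hx => hcei (hc c hcf hx)
          have hc'f : c' ∉ f := fun hx => hc'ei (hc c' hx hc'f')
          exact aux_mk_cycle4 h4 (hpm.1 i) hf hh hf'
            hu huf huh huf'
            hcei hcf hch hcf'
            hc'ei hc'f hc'h hc'f'
            hv hvf hvh hvf'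
        · push_neg at hB
          have hsub2 : h ⊆ f ∪ em i := by
            intro x hx
            rcases hsub x hx with h1 | h1 | h1
            · exact Finset.mem_union_left _ h1
            · exact Finset.mem_union_right _ (by
                by_contra hxei
                exact hxei (hB x hx h1))
            · exact Finset.mem_union_right _ h1
          have : ¬ h ⊆ f := fun hsub3 => hhf (hclut h hh f hf hsub3)
          obtain ⟨w, hwh, hwf⟩ := Finset.not_subset.mp this
          have hwei : w ∈ em i := by
            rcases Finset.mem_union.mp (hsub2 hwh) with h1 | h1
            · exact absurd h1 hwf
            · exact h1
          obtain ⟨c, hch, hcf, hcei⟩ := hA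
          exact aux_mk_cycle3 h3 hh (hpm.1 i) hf
            hwh hwei hwf
            hch hcei hcf
            huh hu huf
      · push_neg at hA
        by_cases hB : ∃ c' ∈ h, c' ∈ f' ∧ c' ∉ em i
        · have hsub2 : h ⊆ f' ∪ em i := by
            intro x hx
            rcases hsub x hx with h1 | h1 | h1
            · exact Finset.mem_union_right _ (by
                by_contra hxei
                exact hxei (hA x hx h1))
            · exact Finset.mem_union_left _ h1
            · exact Finset.mem_union_right _ h1
          have : ¬ h ⊆ f' := fun hsub3 => hhf' (hclut h hh f' hf' hsub3)
          obtain ⟨w, hwh, hwf'⟩ := Finset.not_subset.mp this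
          have hwei : w ∈ em i := by
            rcases Finset.mem_union.mp (hsub2 hwh) with h1 | h1
            · exact absurd h1 hwf'
            · exact h1
          obtain ⟨c', hc'h, hc'f', hc'ei⟩ := hB
          exact aux_mk_cycle3 h3 hh (hpm.1 i) hf'
            hwh hwei hwf'
            hc'h hc'ei hc'f'
            hvh hv hvf'
        · push_neg at hB
          have : h ⊆ em i := by
            intro x hx
            rcases hsub x hx with h1 | h1 | h1
            · exact hA x hx h1
            · exact hB x hx h1
            · exact h1
          exact hhei (hclut h hh (em i) (hpm.1 i) this)
    -- extract a minimal cover inside D containing u and v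
    obtain ⟨M, hMD, hMmin⟩ := aux_exists_min_subcover E D.card D le_rfl hDcov
    have huM : u ∈ M := by
      obtain ⟨x, hx⟩ := hMmin.1 f hf
      rw [Finset.mem_inter] at hx
      have hxu := hDf x (hMD hx.2) hx.1
      exact hxu ▸ hx.2
    have hvM : v ∈ M := by
      obtain ⟨x, hx⟩ := hMmin.1 f' hf'
      rw [Finset.mem_inter] at hx
      have hxv := hDf' x (hMD hx.2) hx.1
      exact hxv ▸ hx.2
    have hone := aux_min_cover_one E hunmixed em hpm hne M hMmin i
    have hsub : ({u, v} : Finset V) ⊆ em i ∩ M := by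
      intro x hx
      rcases Finset.mem_insert.mp hx with rfl | hx
      · exact Finset.mem_inter.mpr ⟨hu, huM⟩
      · rw [Finset.mem_singleton] at hx
        subst hx
        exact Finset.mem_inter.mpr ⟨hv, hvM⟩
    have h2 : 2 ≤ (em i ∩ M).card := by
      have := Finset.card_le_card hsub
      rwa [Finset.card_insert_of_notMem (by simpa using huv), Finset.card_singleton] at this
    omega


/-- complement of the image of a transversal -/
private def auxF {g : ℕ} (σ : Fin g → V) : Finset V := (Finset.image σ Finset.univ)ᶜ

private lemma aux_not_mem_image {g : ℕ} {em : Fin g → Finset V}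
    (hdisj' : ∀ (x : V) (i j : Fin g), x ∈ em i → x ∈ em j → i = j)
    {σ τ : Fin g → V} (hσ : ∀ i, σ i ∈ em i) (hτ : ∀ i, τ i ∈ em i)
    {k : Fin g} (hk : σ k ≠ τ k) : σ k ∉ Finset.image τ Finset.univ := by
  intro hmem
  obtain ⟨m, _, hm⟩ := Finset.mem_image.mp hmem
  have : m = k := hdisj' (σ k) m k (hm ▸ hτ m) (hσ k)
  exact hk (by rw [← hm, this])

private lemma aux_isFacet (E : Set (Finset V)) {g : ℕ} (em : Fin g → Finset V)
    (hmem : ∀ i, em i ∈ E)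
    (hdisj' : ∀ (x : V) (i j : Fin g), x ∈ em i → x ∈ em j → i = j)
    (σ : Fin g → V) (hσ : ∀ i, σ i ∈ em i) (hσcov : ∀ f ∈ E, ∃ i, σ i ∈ f) :
    IsFacet E (auxF σ) := by
  classical
  constructor
  · intro h hh hsub
    obtain ⟨i, hi⟩ := hσcov h hh
    have := hsub hi
    rw [auxF, Finset.mem_compl] at this
    exact this (Finset.mem_image.mpr ⟨i, Finset.mem_univ i, rfl⟩)
  · intro G hG hsubG
    by_contra hneq
    obtain ⟨x, hxG, hxF⟩ := Finset.exists_of_ssubset (lt_of_le_of_ne hsubG hneq)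
    rw [auxF, Finset.mem_compl, not_not] at hxF
    obtain ⟨i, _, hi⟩ := Finset.mem_image.mp hxF
    have hemG : em i ⊆ G := by
      intro y hy
      by_cases hyeq : y = σ i
      · rw [hyeq, hi]; exact hxG
      · apply hsubG
        rw [auxF, Finset.mem_compl]
        intro hyim
        obtain ⟨j, _, hj⟩ := Finset.mem_image.mp hyim
        have : j = i := hdisj' y j i (hj ▸ hσ j) hy
        exact hyeq (by rw [← hj, this])
    exact hG (em i) (hmem i) hemG

private lemma aux_cover_of_facet (E : Set (Finset V)) (hunmixed : Unmixed E)
    {g : ℕ} (em : Fin g → Finset V) (hpm : IsPerfectMatchingKT E em) (hne : ∅ ∉ E)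
    (F : Finset V) (hF : IsFacet E F) :
    ∃ σ : Fin g → V, (∀ i, σ i ∈ em i) ∧ (∀ f ∈ E, ∃ i, σ i ∈ f) ∧ auxF σ = F := by
  classical
  have hCcov : IsVertexCover E Fᶜ := by
    intro e he
    by_contra hemp
    rw [Finset.not_nonempty_iff_eq_empty] at hemp
    apply hF.1 e he
    intro x hx
    by_contra hxF
    have : x ∈ e ∩ Fᶜ := Finset.mem_inter.mpr ⟨hx, Finset.mem_compl.mpr hxF⟩
    rw [hemp] at this
    exact absurd this (Finset.notMem_empty x)
  have hCmin : IsMinimalVertexCover E Fᶜ := by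
    refine ⟨hCcov, fun D hD hDcov => ?_⟩
    have hDind : IsIndependentSet E Dᶜ := by
      intro h hh hsub
      obtain ⟨x, hx⟩ := hDcov h hh
      rw [Finset.mem_inter] at hx
      exact Finset.mem_compl.mp (hsub hx.1) hx.2
    have hFD : F ⊆ Dᶜ := by
      have := Finset.compl_subset_compl.mpr hD.subset
      rwa [compl_compl] at this
    have := hF.2 Dᶜ hDind hFD
    have : D = Fᶜ := by rw [this, compl_compl]
    exact hD.ne this
  have hone := aux_min_cover_one E hunmixed em hpm hne Fᶜ hCmin
  have hex : ∀ i, ∃ a, em i ∩ Fᶜ = {a} := fun i => Finset.card_eq_one.mp (hone i)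
  choose σ hσ using hex
  have hσi : ∀ i, σ i ∈ em i ∩ Fᶜ := fun i => (hσ i).symm ▸ Finset.mem_singleton_self (σ i)
  refine ⟨σ, fun i => (Finset.mem_inter.mp (hσi i)).1, ?_, ?_⟩
  · intro f hf
    obtain ⟨x, hxf, hxF⟩ := Finset.not_subset.mp (hF.1 f hf)
    obtain ⟨i, hi⟩ := hpm.2.2.1 x
    have : x ∈ em i ∩ Fᶜ := Finset.mem_inter.mpr ⟨hi, Finset.mem_compl.mpr hxF⟩
    rw [hσ i, Finset.mem_singleton] at this
    exact ⟨i, this ▸ hxf⟩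
  · rw [auxF]
    rw [← compl_compl F]
    congr 1
    apply Finset.Subset.antisymm
    · intro x hx
      obtain ⟨i, _, hi⟩ := Finset.mem_image.mp hx
      exact hi ▸ (Finset.mem_inter.mp (hσi i)).2
    · intro x hx
      obtain ⟨i, hi⟩ := hpm.2.2.1 x
      have : x ∈ em i ∩ Fᶜ := Finset.mem_inter.mpr ⟨hi, hx⟩
      rw [hσ i, Finset.mem_singleton] at this
      exact Finset.mem_image.mpr ⟨i, Finset.mem_univ i, this.symm⟩


private noncomputable def auxN (κ : V → ℕ) (B : ℕ) {g : ℕ} (σ : Fin g → V) : ℕ :=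
  ∑ i, κ (σ i) * B ^ (i : ℕ)

private lemma auxN_inj {κ : V → ℕ} {B : ℕ} (hκB : ∀ w, κ w < B)
    (hκinj : Function.Injective κ) {g : ℕ} {σ τ : Fin g → V}
    (h : auxN κ B σ = auxN κ B τ) : σ = τ := by
  have := aux_digits (fun i => κ (σ i)) (fun i => κ (τ i))
    (fun i => hκB _) (fun i => hκB _) h
  funext i
  exact hκinj (congrFun this i)

private lemma auxN_le (κ : V → ℕ) (B : ℕ) {g : ℕ} {σ τ : Fin g → V}
    (h : ∀ i, κ (σ i) ≤ κ (τ i)) : auxN κ B σ ≤ auxN κ B τ :=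
  Finset.sum_le_sum (fun i _ => Nat.mul_le_mul_right _ (h i))

private lemma auxN_lt_update (κ : V → ℕ) {B : ℕ} (hB : 0 < B) {g : ℕ}
    (τ : Fin g → V) (k : Fin g) (w : V) (hw : κ (τ k) < κ w) :
    auxN κ B τ < auxN κ B (Function.update τ k w) := by
  apply Finset.sum_lt_sum
  · intro i _
    by_cases hik : i = k
    · subst hik
      rw [Function.update_self]
      exact Nat.mul_le_mul_right _ hw.le
    · rw [Function.update_of_ne hik]
  · refine ⟨k, Finset.mem_univ k, ?_⟩
    rw [Function.update_self]
    exact Nat.mul_lt_mul_of_pos_right hw (pow_pos hB _)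

private lemma aux_kappa (E : Set (Finset V)) (hclut : IsClutter E) (hunmixed : Unmixed E)
    {g : ℕ} (em : Fin g → Finset V) (hpm : IsPerfectMatchingKT E em) (hne : ∅ ∉ E)
    (h3 : ¬ HasCycleOfLength E 3) (h4 : ¬ HasCycleOfLength E 4) :
    ∃ (κ : V → ℕ) (B : ℕ), 0 < B ∧ (∀ w, κ w < B) ∧ Function.Injective κ ∧
      ∀ (i : Fin g) (u v : V), u ∈ em i → v ∈ em i → κ u ≤ κ v →
        ∀ f ∈ E, u ∈ f → v ∈ f := by
  classical
  set n := Fintype.card V with hn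
  set Efin : Finset (Finset V) := Finset.univ.filter (fun e => e ∈ E) with hEfin
  set deg : V → ℕ := fun w => (Efin.filter (fun e => w ∈ e)).card with hdeg
  set ι : V → ℕ := fun w => ((Fintype.equivFin V) w : ℕ) with hι
  set κ : V → ℕ := fun w => deg w * (n + 1) + ι w with hκdef
  have hκw : ∀ w, κ w = deg w * (n + 1) + ι w := fun w => by rw [hκdef]
  have hιlt : ∀ w, ι w < n + 1 := by
    intro w
    have h := ((Fintype.equivFin V) w).isLt
    have h2 : ι w = ((Fintype.equivFin V) w : ℕ) := by simp only [hι]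
    omega
  have hdegle : ∀ w, deg w ≤ Efin.card := fun w => Finset.card_filter_le _ _
  refine ⟨κ, (Efin.card + 1) * (n + 1), Nat.mul_pos (Nat.succ_pos _) (Nat.succ_pos _), ?_, ?_, ?_⟩
  · intro w
    have h1 := hdegle w
    have h2 := hιlt w
    calc κ w = deg w * (n + 1) + ι w := hκw w
      _ < deg w * (n + 1) + (n + 1) := by omega
      _ = (deg w + 1) * (n + 1) := by ring
      _ ≤ (Efin.card + 1) * (n + 1) := Nat.mul_le_mul_right _ (by omega)
  · intro u v h
    rw [hκw u, hκw v] at h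
    have h' : ι u + deg u * (n + 1) = ι v + deg v * (n + 1) := by omega
    have h1 := congrArg (· % (n + 1)) h'
    simp only [Nat.add_mul_mod_self_right] at h1
    rw [Nat.mod_eq_of_lt (hιlt u), Nat.mod_eq_of_lt (hιlt v)] at h1
    simp only [hι] at h1
    exact (Fintype.equivFin V).injective (Fin.val_injective h1)
  · intro i u v hu hv hκle f hf huf
    rcases aux_chain E hclut hunmixed em hpm hne h3 h4 i u hu v hv with hle | hge
    · exact hle f hf huf
    · have hsubfin : Efin.filter (fun e => v ∈ e) ⊆ Efin.filter (fun e => u ∈ e) := by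
        intro e he
        rw [Finset.mem_filter] at he ⊢
        refine ⟨he.1, ?_⟩
        have heE : e ∈ E := by
          have := he.1
          rw [hEfin, Finset.mem_filter] at this
          exact this.2
        exact hge e heE he.2
      have hdvu : deg v ≤ deg u := by
        rw [hdeg]
        exact Finset.card_le_card hsubfin
      by_cases hdeq : deg u = deg v
      · have heqf : Efin.filter (fun e => v ∈ e) = Efin.filter (fun e => u ∈ e) := by
          apply Finset.eq_of_subset_of_card_le hsubfin
          have h1 : (Efin.filter (fun e => u ∈ e)).card = deg u := by rw [hdeg]
          have h2 : (Efin.filter (fun e => v ∈ e)).card = deg v := by rw [hdeg]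
          omega
        have hfromU : f ∈ Efin.filter (fun e => u ∈ e) :=
          Finset.mem_filter.mpr ⟨by rw [hEfin]; exact Finset.mem_filter.mpr ⟨Finset.mem_univ f, hf⟩, huf⟩
        rw [← heqf] at hfromU
        exact (Finset.mem_filter.mp hfromU).2
      · exfalso
        have hdlt : deg v < deg u := lt_of_le_of_ne hdvu (fun h => hdeq h.symm)
        have hmul : (deg v + 1) * (n + 1) ≤ deg u * (n + 1) :=
          Nat.mul_le_mul_right _ (by omega)
        rw [Nat.succ_mul] at hmul
        rw [hκw u, hκw v] at hκle
        have h2 := hιlt v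
        omega

/-- An unmixed clutter with a perfect matching of König type and without
cycles of length 3 or 4 has a pure shellable independence complex. -/
theorem unmixed_no_small_cycles_pure_shellable
    (E : Set (Finset V)) (hclut : IsClutter E) (hunmixed : Unmixed E)
    {g : ℕ} (em : Fin g → Finset V) (hpm : IsPerfectMatchingKT E em)
    (h3 : ¬ HasCycleOfLength E 3) (h4 : ¬ HasCycleOfLength E 4) :
    PureShellable (cFacets E) := by
  classical
  by_cases hne : ∅ ∈ E
  · -- degenerate case: the empty set is an edge, so there are no facets
    have hfac : ∀ F : Finset V, ¬ IsFacet E F := by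
      intro F hF
      exact hF.1 ∅ hne (Finset.empty_subset F)
    constructor
    · intro F hF
      exact absurd hF (hfac F)
    · exact ⟨0, Fin.elim0, fun a => a.elim0,
        fun G => ⟨fun hG => absurd hG (hfac G), fun ⟨i, _⟩ => i.elim0⟩,
        fun i => i.elim0⟩
  · -- main case
    have hmem := hpm.1
    have hdisjem := hpm.2.1
    have hcovV := hpm.2.2.1
    have hdisj' : ∀ (x : V) (i j : Fin g), x ∈ em i → x ∈ em j → i = j := by
      intro x i j hi hj
      by_contra hij
      exact Finset.disjoint_left.mp (hdisjem i j hij) hi hj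
    obtain ⟨κ, B, hB, hκB, hκinj, hstar⟩ := aux_kappa E hclut hunmixed em hpm hne h3 h4
    set Cov : Finset (Fin g → V) :=
      Finset.univ.filter (fun σ => (∀ i, σ i ∈ em i) ∧ ∀ f ∈ E, ∃ i, σ i ∈ f) with hCovdef
    have hCovMem : ∀ σ, σ ∈ Cov ↔ ((∀ i, σ i ∈ em i) ∧ ∀ f ∈ E, ∃ i, σ i ∈ f) := by
      intro σ
      rw [hCovdef, Finset.mem_filter]
      simp only [Finset.mem_univ, true_and]
    have hNinj : ∀ σ τ : Fin g → V, auxN κ B σ = auxN κ B τ → σ = τ :=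
      fun σ τ h => auxN_inj hκB hκinj h
    set S' : Finset ℕ := Cov.image (auxN κ B) with hS'def
    set s := S'.card with hsdef
    set eIso := S'.orderIsoOfFin hsdef.symm with heIso
    have hσex : ∀ j : Fin s, ∃ σ, σ ∈ Cov ∧ auxN κ B σ = ((eIso j.rev : ℕ)) := by
      intro j
      have h2 := (eIso j.rev).2
      obtain ⟨σ, hσ, hval⟩ := Finset.mem_image.mp h2
      exact ⟨σ, hσ, hval⟩
    choose σf hσfCov hσfN using hσex
    have htr : ∀ j : Fin s, (∀ i, σf j i ∈ em i) ∧ ∀ f ∈ E, ∃ i, σf j i ∈ f :=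
      fun j => (hCovMem _).mp (hσfCov j)
    have hFfacet : ∀ j, IsFacet E (auxF (σf j)) := fun j =>
      aux_isFacet E em hmem hdisj' (σf j) (htr j).1 (htr j).2
    have hsurj : ∀ σ ∈ Cov, ∃ j : Fin s, σf j = σ := by
      intro σ hσ
      have hmemS' : auxN κ B σ ∈ S' := by
        rw [hS'def]
        exact Finset.mem_image_of_mem _ hσ
      obtain ⟨m, hm⟩ := eIso.surjective ⟨_, hmemS'⟩
      refine ⟨m.rev, hNinj _ _ ?_⟩
      rw [hσfN m.rev, Fin.rev_rev, hm]
    have hσinjem : ∀ σ : Fin g → V, (∀ i, σ i ∈ em i) → Function.Injective σ := by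
      intro σ hσ a b hab
      exact hdisj' (σ a) a b (hσ a) (hab ▸ hσ b)
    have hcardF : ∀ σ : Fin g → V, (∀ i, σ i ∈ em i) →
        (auxF σ).card = Fintype.card V - g := by
      intro σ hσ
      rw [auxF, Finset.card_compl, Finset.card_image_of_injective _ (hσinjem σ hσ),
        Finset.card_fin]
    constructor
    · -- purity
      intro F hF G hG
      obtain ⟨σ1, h1a, _, h1c⟩ := aux_cover_of_facet E hunmixed em hpm hne F hF
      obtain ⟨σ2, h2a, _, h2c⟩ := aux_cover_of_facet E hunmixed em hpm hne G hG
      rw [← h1c, ← h2c, hcardF σ1 h1a, hcardF σ2 h2a]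
    · -- shellability
      refine ⟨s, fun j => auxF (σf j), ?_, ?_, ?_⟩
      · -- injectivity
        intro a b hab
        by_contra hne2
        have hab2 : σf a ≠ σf b := by
          intro h
          apply hne2
          have hNe : (eIso a.rev : ℕ) = (eIso b.rev : ℕ) := by
            rw [← hσfN a, ← hσfN b, h]
          exact Fin.rev_injective (eIso.injective (Subtype.coe_injective hNe))
        have hkex : ∃ k, σf a k ≠ σf b k := by
          by_contra hall
          push_neg at hall
          exact hab2 (funext hall)
        obtain ⟨k, hk⟩ := hkex
        have hv1 : σf a k ∈ auxF (σf b) :=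
          Finset.mem_compl.mpr (aux_not_mem_image hdisj' (htr a).1 (htr b).1 hk)
        have hv2 : σf a k ∉ auxF (σf a) := by
          rw [auxF, Finset.mem_compl, not_not]
          exact Finset.mem_image.mpr ⟨k, Finset.mem_univ k, rfl⟩
        have hab3 : auxF (σf a) = auxF (σf b) := hab
        rw [hab3] at hv2
        exact hv2 hv1
      · -- facets are exactly the enumerated sets
        intro G
        constructor
        · intro hG
          obtain ⟨σ, ha, hb, hc⟩ := aux_cover_of_facet E hunmixed em hpm hne G hG
          obtain ⟨j, hj⟩ := hsurj σ ((hCovMem σ).mpr ⟨ha, hb⟩)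
          exact ⟨j, by show auxF (σf j) = G; rw [hj, hc]⟩
        · rintro ⟨j, rfl⟩
          exact hFfacet j
      · -- shelling condition
        intro i j hij
        have hNlt : auxN κ B (σf j) < auxN κ B (σf i) := by
          rw [hσfN i, hσfN j]
          have hrev : j.rev < i.rev := Fin.rev_lt_rev.mpr hij
          exact Subtype.coe_lt_coe.mpr (eIso.strictMono hrev)
        have hex : ∃ k, κ (σf j k) < κ (σf i k) := by
          by_contra hcon
          push_neg at hcon
          have := auxN_le κ B (σ := σf i) (τ := σf j) hcon
          omega
        obtain ⟨k, hk⟩ := hex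
        have hkne : σf i k ≠ σf j k := fun h => absurd hk (by rw [h]; exact lt_irrefl _)
        have hvF : σf i k ∈ auxF (σf j) :=
          Finset.mem_compl.mpr (aux_not_mem_image hdisj' (htr i).1 (htr j).1 hkne)
        have hvnotF : σf i k ∉ auxF (σf i) := by
          rw [auxF, Finset.mem_compl, not_not]
          exact Finset.mem_image.mpr ⟨k, Finset.mem_univ k, rfl⟩
        refine ⟨σf i k, Finset.mem_sdiff.mpr ⟨hvF, hvnotF⟩, ?_⟩
        set ρ : Fin g → V := Function.update (σf j) k (σf i k) with hρ
        have hρtr : ∀ m, ρ m ∈ em m := by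
          intro m
          by_cases hmk : m = k
          · rw [hρ, hmk, Function.update_self]
            exact (htr i).1 k
          · rw [hρ, Function.update_of_ne hmk]
            exact (htr j).1 m
        have hρCov : ρ ∈ Cov := by
          rw [hCovMem]
          refine ⟨hρtr, ?_⟩
          intro f hf
          obtain ⟨m, hm⟩ := (htr j).2 f hf
          by_cases hmk : m = k
          · rw [hmk] at hm
            refine ⟨k, ?_⟩
            rw [hρ, Function.update_self]
            exact hstar k (σf j k) (σf i k) ((htr j).1 k) ((htr i).1 k) hk.le f hf hm
          · exact ⟨m, by rw [hρ, Function.update_of_ne hmk]; exact hm⟩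
        have hNρ : auxN κ B (σf j) < auxN κ B ρ := auxN_lt_update κ hB (σf j) k (σf i k) hk
        obtain ⟨l, hl⟩ := hsurj ρ hρCov
        have hlj : l < j := by
          rw [← Fin.rev_lt_rev]
          apply eIso.lt_iff_lt.mp
          rw [← Subtype.coe_lt_coe, ← hσfN j, ← hσfN l, hl]
          exact hNρ
        refine ⟨l, hlj, ?_⟩
        show auxF (σf j) \ auxF (σf l) = {σf i k}
        rw [hl]
        ext x
        simp only [Finset.mem_sdiff, auxF, Finset.mem_compl, not_not, Finset.mem_singleton]
        constructor
        · rintro ⟨hx1, hx2⟩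
          obtain ⟨m, _, hm⟩ := Finset.mem_image.mp hx2
          by_cases hmk : m = k
          · rw [hmk] at hm
            rw [hρ, Function.update_self] at hm
            exact hm.symm
          · rw [hρ, Function.update_of_ne hmk] at hm
            exact absurd (Finset.mem_image.mpr ⟨m, Finset.mem_univ m, hm⟩) hx1
        · rintro rfl
          refine ⟨aux_not_mem_image hdisj' (htr i).1 (htr j).1 hkne, ?_⟩
          exact Finset.mem_image.mpr ⟨k, Finset.mem_univ k, by rw [hρ, Function.update_self]⟩
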